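/- For every nonzero vector v ∈ ℝ³, the orbit G_icos·v = {A·v : A ∈ G_icos} has cardinality 12, 20, 30, or 60. -/

import Mathlib

open Matrix

/-- A 3×3 real matrix is a rotation if it is orthogonal with determinant 1. -/
def IsRotation (A : Matrix (Fin 3) (Fin 3) ℝ) : Prop := Aᵀ * A = 1 ∧ A.det = 1

/-- The action of a 3×3 matrix on ℝ³ by matrix–vector multiplication. -/
noncomputable def act (A : Matrix (Fin 3) (Fin 3) ℝ) (v : EuclideanSpace ℝ (Fin 3)) :
    EuclideanSpace ℝ (Fin 3) := WithLp.toLp 2 (A.mulVec v)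

/-- The orbit of a point under a set of matrices. -/
def orb (G : Set (Matrix (Fin 3) (Fin 3) ℝ)) (v : EuclideanSpace ℝ (Fin 3)) :
    Set (EuclideanSpace ℝ (Fin 3)) := {q | ∃ A ∈ G, act A v = q}

/-- The golden ratio. -/
noncomputable def φ : ℝ := (1 + Real.sqrt 5) / 2

/-- The twelve vertices (0,±1,±φ), (±1,±φ,0), (±φ,0,±1) of a regular icosahedron. -/
noncomputable def Vicos : Set (EuclideanSpace ℝ (Fin 3)) :=
  {p | ∃ s₁ s₂ : ℝ, (s₁ = 1 ∨ s₁ = -1) ∧ (s₂ = 1 ∨ s₂ = -1) ∧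
    (p = ![0, s₁, s₂ * φ] ∨ p = ![s₁, s₂ * φ, 0] ∨ p = ![s₁ * φ, 0, s₂])}

/-- The icosahedral rotation group: all rotations preserving `Vicos` setwise. -/
noncomputable def Gicos : Set (Matrix (Fin 3) (Fin 3) ℝ) :=
  {A | IsRotation A ∧ act A '' Vicos = Vicos}



structure Zphi where
  a : ℤ
  b : ℤ
deriving DecidableEq

namespace Zphi

@[ext] theorem ext' {x y : Zphi} (h1 : x.a = y.a) (h2 : x.b = y.b) : x = y := by
  cases x; cases y; simp_all

instance : Zero Zphi := ⟨⟨0,0⟩⟩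
instance : One Zphi := ⟨⟨1,0⟩⟩
instance : Add Zphi := ⟨fun x y => ⟨x.a+y.a, x.b+y.b⟩⟩
instance : Neg Zphi := ⟨fun x => ⟨-x.a, -x.b⟩⟩
instance : Mul Zphi := ⟨fun x y => ⟨x.a*y.a + x.b*y.b, x.a*y.b + x.b*y.a + x.b*y.b⟩⟩

theorem add_def (x y : Zphi) : x + y = ⟨x.a+y.a, x.b+y.b⟩ := rfl
theorem mul_def (x y : Zphi) : x * y = ⟨x.a*y.a + x.b*y.b, x.a*y.b + x.b*y.a + x.b*y.b⟩ := rfl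
theorem neg_def (x : Zphi) : -x = ⟨-x.a, -x.b⟩ := rfl
theorem zero_def : (0 : Zphi) = ⟨0,0⟩ := rfl
theorem one_def : (1 : Zphi) = ⟨1,0⟩ := rfl

instance : CommRing Zphi where
  add_assoc x y z := by ext <;> simp [add_def] <;> ring
  zero_add x := by ext <;> simp [add_def, zero_def]
  add_zero x := by ext <;> simp [add_def, zero_def]
  add_comm x y := by ext <;> simp [add_def] <;> ring
  mul_assoc x y z := by ext <;> simp [mul_def] <;> ring
  one_mul x := by ext <;> simp [mul_def, one_def]
  mul_one x := by ext <;> simp [mul_def, one_def]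
  left_distrib x y z := by ext <;> simp [mul_def, add_def] <;> ring
  right_distrib x y z := by ext <;> simp [mul_def, add_def] <;> ring
  mul_comm x y := by ext <;> simp [mul_def] <;> ring
  neg_add_cancel x := by ext <;> simp [neg_def, add_def, zero_def]
  zero_mul x := by ext <;> simp [mul_def, zero_def]
  mul_zero x := by ext <;> simp [mul_def, zero_def]
  nsmul := nsmulRec
  zsmul := zsmulRec

noncomputable def toR : Zphi →+* ℝ where
  toFun x := (x.a : ℝ) + (x.b : ℝ) * φ
  map_one' := by simp [one_def]
  map_mul' x y := by
    have h5 : Real.sqrt 5 ^ 2 = 5 := Real.sq_sqrt (by norm_num)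
    simp only [mul_def, φ]
    push_cast
    have h5' : Real.sqrt 5 * Real.sqrt 5 = 5 := Real.mul_self_sqrt (by norm_num)
    field_simp
    ring_nf
    rw [show Real.sqrt 5 ^ 2 = 5 from h5]
    ring
  map_zero' := by simp [zero_def]
  map_add' x y := by simp [add_def]; push_cast; ring

theorem toR_injective : Function.Injective toR := by
  have h5 : Irrational (Real.sqrt 5) := by
    simpa using Nat.Prime.irrational_sqrt (p := 5) (by norm_num)
  intro x y h
  simp only [toR, RingHom.coe_mk, MonoidHom.coe_mk, OneHom.coe_mk] at h
  by_cases hb : x.b = y.b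
  · ext
    · have h2 := h; rw [hb] at h2
      have : (x.a : ℝ) = y.a := by linarith
      exact_mod_cast this
    · exact hb
  · exfalso
    have hφ : φ = ((x.a : ℝ) - y.a) / ((y.b : ℝ) - x.b) := by
      have : ((y.b : ℝ) - x.b) ≠ 0 := by
        intro hc; apply hb; have : (x.b:ℝ) = y.b := by linarith
        exact_mod_cast this
      field_simp
      linarith
    have : Real.sqrt 5 = 2 * (((x.a : ℝ) - y.a) / ((y.b : ℝ) - x.b)) - 1 := by
      rw [← hφ]; simp [φ]; ring
    apply h5
    rw [this]
    have : ((2 * ((x.a - y.a) / ((y.b : ℚ) - x.b)) - 1 : ℚ) : ℝ) = 2 * (((x.a : ℝ) - y.a) / ((y.b : ℝ) - x.b)) - 1 := by push_cast; ring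
    exact ⟨_, this⟩
end Zphi



open Zphi


abbrev MatZ := Matrix (Fin 3) (Fin 3) Zphi

abbrev VecZ := Fin 3 → Zphi

def Ms : Fin 60 → MatZ := ![
  !![⟨2,0⟩, ⟨0,0⟩, ⟨0,0⟩; ⟨0,0⟩, ⟨2,0⟩, ⟨0,0⟩; ⟨0,0⟩, ⟨0,0⟩, ⟨2,0⟩],
  !![⟨-1,1⟩, ⟨0,-1⟩, ⟨1,0⟩; ⟨0,1⟩, ⟨1,0⟩, ⟨-1,1⟩; ⟨-1,0⟩, ⟨-1,1⟩, ⟨0,1⟩],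
  !![⟨0,-1⟩, ⟨-1,0⟩, ⟨-1,1⟩; ⟨1,0⟩, ⟨1,-1⟩, ⟨0,1⟩; ⟨1,-1⟩, ⟨0,1⟩, ⟨1,0⟩],
  !![⟨0,-1⟩, ⟨1,0⟩, ⟨1,-1⟩; ⟨-1,0⟩, ⟨1,-1⟩, ⟨0,1⟩; ⟨-1,1⟩, ⟨0,1⟩, ⟨1,0⟩],
  !![⟨-1,1⟩, ⟨0,1⟩, ⟨-1,0⟩; ⟨0,-1⟩, ⟨1,0⟩, ⟨-1,1⟩; ⟨1,0⟩, ⟨-1,1⟩, ⟨0,1⟩],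
  !![⟨0,1⟩, ⟨1,0⟩, ⟨-1,1⟩; ⟨-1,0⟩, ⟨-1,1⟩, ⟨0,1⟩; ⟨-1,1⟩, ⟨0,-1⟩, ⟨1,0⟩],
  !![⟨1,0⟩, ⟨1,-1⟩, ⟨0,1⟩; ⟨1,-1⟩, ⟨0,1⟩, ⟨1,0⟩; ⟨0,-1⟩, ⟨-1,0⟩, ⟨-1,1⟩],
  !![⟨0,-1⟩, ⟨1,0⟩, ⟨-1,1⟩; ⟨1,0⟩, ⟨-1,1⟩, ⟨0,1⟩; ⟨-1,1⟩, ⟨0,1⟩, ⟨-1,0⟩],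
  !![⟨-1,0⟩, ⟨1,-1⟩, ⟨0,1⟩; ⟨-1,1⟩, ⟨0,1⟩, ⟨1,0⟩; ⟨0,-1⟩, ⟨1,0⟩, ⟨1,-1⟩],
  !![⟨0,0⟩, ⟨2,0⟩, ⟨0,0⟩; ⟨0,0⟩, ⟨0,0⟩, ⟨2,0⟩; ⟨2,0⟩, ⟨0,0⟩, ⟨0,0⟩],
  !![⟨1,-1⟩, ⟨0,1⟩, ⟨1,0⟩; ⟨0,-1⟩, ⟨-1,0⟩, ⟨-1,1⟩; ⟨1,0⟩, ⟨1,-1⟩, ⟨0,1⟩],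
  !![⟨-1,0⟩, ⟨-1,1⟩, ⟨0,1⟩; ⟨-1,1⟩, ⟨0,-1⟩, ⟨1,0⟩; ⟨0,1⟩, ⟨1,0⟩, ⟨-1,1⟩],
  !![⟨1,0⟩, ⟨-1,1⟩, ⟨0,1⟩; ⟨-1,1⟩, ⟨0,1⟩, ⟨-1,0⟩; ⟨0,-1⟩, ⟨1,0⟩, ⟨-1,1⟩],
  !![⟨0,0⟩, ⟨0,0⟩, ⟨2,0⟩; ⟨2,0⟩, ⟨0,0⟩, ⟨0,0⟩; ⟨0,0⟩, ⟨2,0⟩, ⟨0,0⟩],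
  !![⟨-1,1⟩, ⟨0,1⟩, ⟨1,0⟩; ⟨0,-1⟩, ⟨1,0⟩, ⟨1,-1⟩; ⟨-1,0⟩, ⟨1,-1⟩, ⟨0,1⟩],
  !![⟨0,1⟩, ⟨-1,0⟩, ⟨-1,1⟩; ⟨-1,0⟩, ⟨1,-1⟩, ⟨0,1⟩; ⟨1,-1⟩, ⟨0,-1⟩, ⟨-1,0⟩],
  !![⟨1,-1⟩, ⟨0,-1⟩, ⟨1,0⟩; ⟨0,-1⟩, ⟨1,0⟩, ⟨-1,1⟩; ⟨-1,0⟩, ⟨1,-1⟩, ⟨0,-1⟩],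
  !![⟨0,1⟩, ⟨1,0⟩, ⟨1,-1⟩; ⟨1,0⟩, ⟨1,-1⟩, ⟨0,1⟩; ⟨-1,1⟩, ⟨0,-1⟩, ⟨-1,0⟩],
  !![⟨-2,0⟩, ⟨0,0⟩, ⟨0,0⟩; ⟨0,0⟩, ⟨2,0⟩, ⟨0,0⟩; ⟨0,0⟩, ⟨0,0⟩, ⟨-2,0⟩],
  !![⟨1,-1⟩, ⟨0,1⟩, ⟨-1,0⟩; ⟨0,1⟩, ⟨1,0⟩, ⟨-1,1⟩; ⟨1,0⟩, ⟨1,-1⟩, ⟨0,-1⟩],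
  !![⟨-1,0⟩, ⟨1,-1⟩, ⟨0,1⟩; ⟨1,-1⟩, ⟨0,-1⟩, ⟨-1,0⟩; ⟨0,1⟩, ⟨-1,0⟩, ⟨-1,1⟩],
  !![⟨1,0⟩, ⟨1,-1⟩, ⟨0,1⟩; ⟨-1,1⟩, ⟨0,-1⟩, ⟨-1,0⟩; ⟨0,1⟩, ⟨1,0⟩, ⟨1,-1⟩],
  !![⟨0,-1⟩, ⟨1,0⟩, ⟨-1,1⟩; ⟨-1,0⟩, ⟨1,-1⟩, ⟨0,-1⟩; ⟨1,-1⟩, ⟨0,-1⟩, ⟨1,0⟩],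
  !![⟨0,1⟩, ⟨1,0⟩, ⟨-1,1⟩; ⟨1,0⟩, ⟨1,-1⟩, ⟨0,-1⟩; ⟨1,-1⟩, ⟨0,1⟩, ⟨-1,0⟩],
  !![⟨0,0⟩, ⟨2,0⟩, ⟨0,0⟩; ⟨0,0⟩, ⟨0,0⟩, ⟨-2,0⟩; ⟨-2,0⟩, ⟨0,0⟩, ⟨0,0⟩],
  !![⟨1,0⟩, ⟨-1,1⟩, ⟨0,1⟩; ⟨1,-1⟩, ⟨0,-1⟩, ⟨1,0⟩; ⟨0,1⟩, ⟨-1,0⟩, ⟨1,-1⟩],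
  !![⟨0,0⟩, ⟨0,0⟩, ⟨2,0⟩; ⟨-2,0⟩, ⟨0,0⟩, ⟨0,0⟩; ⟨0,0⟩, ⟨-2,0⟩, ⟨0,0⟩],
  !![⟨-1,1⟩, ⟨0,1⟩, ⟨1,0⟩; ⟨0,1⟩, ⟨-1,0⟩, ⟨-1,1⟩; ⟨1,0⟩, ⟨-1,1⟩, ⟨0,-1⟩],
  !![⟨-1,0⟩, ⟨-1,1⟩, ⟨0,1⟩; ⟨1,-1⟩, ⟨0,1⟩, ⟨-1,0⟩; ⟨0,-1⟩, ⟨-1,0⟩, ⟨1,-1⟩],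
  !![⟨1,-1⟩, ⟨0,1⟩, ⟨1,0⟩; ⟨0,1⟩, ⟨1,0⟩, ⟨1,-1⟩; ⟨-1,0⟩, ⟨-1,1⟩, ⟨0,-1⟩],
  !![⟨-2,0⟩, ⟨0,0⟩, ⟨0,0⟩; ⟨0,0⟩, ⟨-2,0⟩, ⟨0,0⟩; ⟨0,0⟩, ⟨0,0⟩, ⟨2,0⟩],
  !![⟨1,-1⟩, ⟨0,-1⟩, ⟨1,0⟩; ⟨0,1⟩, ⟨-1,0⟩, ⟨1,-1⟩; ⟨1,0⟩, ⟨-1,1⟩, ⟨0,1⟩],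
  !![⟨0,1⟩, ⟨-1,0⟩, ⟨-1,1⟩; ⟨1,0⟩, ⟨-1,1⟩, ⟨0,-1⟩; ⟨-1,1⟩, ⟨0,1⟩, ⟨1,0⟩],
  !![⟨1,-1⟩, ⟨0,1⟩, ⟨-1,0⟩; ⟨0,-1⟩, ⟨-1,0⟩, ⟨1,-1⟩; ⟨-1,0⟩, ⟨-1,1⟩, ⟨0,1⟩],
  !![⟨0,1⟩, ⟨1,0⟩, ⟨1,-1⟩; ⟨-1,0⟩, ⟨-1,1⟩, ⟨0,-1⟩; ⟨1,-1⟩, ⟨0,1⟩, ⟨1,0⟩],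
  !![⟨0,1⟩, ⟨-1,0⟩, ⟨1,-1⟩; ⟨1,0⟩, ⟨-1,1⟩, ⟨0,1⟩; ⟨1,-1⟩, ⟨0,-1⟩, ⟨1,0⟩],
  !![⟨0,0⟩, ⟨-2,0⟩, ⟨0,0⟩; ⟨0,0⟩, ⟨0,0⟩, ⟨2,0⟩; ⟨-2,0⟩, ⟨0,0⟩, ⟨0,0⟩],
  !![⟨0,-1⟩, ⟨-1,0⟩, ⟨1,-1⟩; ⟨-1,0⟩, ⟨-1,1⟩, ⟨0,1⟩; ⟨1,-1⟩, ⟨0,1⟩, ⟨-1,0⟩],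
  !![⟨1,0⟩, ⟨-1,1⟩, ⟨0,-1⟩; ⟨-1,1⟩, ⟨0,1⟩, ⟨1,0⟩; ⟨0,1⟩, ⟨-1,0⟩, ⟨-1,1⟩],
  !![⟨-1,0⟩, ⟨-1,1⟩, ⟨0,-1⟩; ⟨1,-1⟩, ⟨0,1⟩, ⟨1,0⟩; ⟨0,1⟩, ⟨1,0⟩, ⟨1,-1⟩],
  !![⟨1,-1⟩, ⟨0,-1⟩, ⟨-1,0⟩; ⟨0,1⟩, ⟨-1,0⟩, ⟨-1,1⟩; ⟨-1,0⟩, ⟨1,-1⟩, ⟨0,1⟩],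
  !![⟨-1,1⟩, ⟨0,-1⟩, ⟨-1,0⟩; ⟨0,1⟩, ⟨1,0⟩, ⟨1,-1⟩; ⟨1,0⟩, ⟨1,-1⟩, ⟨0,1⟩],
  !![⟨-1,0⟩, ⟨1,-1⟩, ⟨0,-1⟩; ⟨1,-1⟩, ⟨0,-1⟩, ⟨1,0⟩; ⟨0,-1⟩, ⟨1,0⟩, ⟨-1,1⟩],
  !![⟨1,0⟩, ⟨1,-1⟩, ⟨0,-1⟩; ⟨1,-1⟩, ⟨0,1⟩, ⟨-1,0⟩; ⟨0,1⟩, ⟨1,0⟩, ⟨-1,1⟩],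
  !![⟨0,0⟩, ⟨0,0⟩, ⟨-2,0⟩; ⟨-2,0⟩, ⟨0,0⟩, ⟨0,0⟩; ⟨0,0⟩, ⟨2,0⟩, ⟨0,0⟩],
  !![⟨2,0⟩, ⟨0,0⟩, ⟨0,0⟩; ⟨0,0⟩, ⟨-2,0⟩, ⟨0,0⟩; ⟨0,0⟩, ⟨0,0⟩, ⟨-2,0⟩],
  !![⟨0,-1⟩, ⟨-1,0⟩, ⟨-1,1⟩; ⟨-1,0⟩, ⟨-1,1⟩, ⟨0,-1⟩; ⟨-1,1⟩, ⟨0,-1⟩, ⟨-1,0⟩],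
  !![⟨-1,1⟩, ⟨0,-1⟩, ⟨1,0⟩; ⟨0,-1⟩, ⟨-1,0⟩, ⟨1,-1⟩; ⟨1,0⟩, ⟨1,-1⟩, ⟨0,-1⟩],
  !![⟨0,-1⟩, ⟨1,0⟩, ⟨1,-1⟩; ⟨1,0⟩, ⟨-1,1⟩, ⟨0,-1⟩; ⟨1,-1⟩, ⟨0,-1⟩, ⟨-1,0⟩],
  !![⟨-1,1⟩, ⟨0,1⟩, ⟨-1,0⟩; ⟨0,1⟩, ⟨-1,0⟩, ⟨1,-1⟩; ⟨-1,0⟩, ⟨1,-1⟩, ⟨0,-1⟩],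
  !![⟨0,0⟩, ⟨-2,0⟩, ⟨0,0⟩; ⟨0,0⟩, ⟨0,0⟩, ⟨-2,0⟩; ⟨2,0⟩, ⟨0,0⟩, ⟨0,0⟩],
  !![⟨0,-1⟩, ⟨-1,0⟩, ⟨1,-1⟩; ⟨1,0⟩, ⟨1,-1⟩, ⟨0,-1⟩; ⟨-1,1⟩, ⟨0,-1⟩, ⟨1,0⟩],
  !![⟨-1,0⟩, ⟨-1,1⟩, ⟨0,-1⟩; ⟨-1,1⟩, ⟨0,-1⟩, ⟨-1,0⟩; ⟨0,-1⟩, ⟨-1,0⟩, ⟨-1,1⟩],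
  !![⟨0,1⟩, ⟨-1,0⟩, ⟨1,-1⟩; ⟨-1,0⟩, ⟨1,-1⟩, ⟨0,-1⟩; ⟨-1,1⟩, ⟨0,1⟩, ⟨-1,0⟩],
  !![⟨1,0⟩, ⟨-1,1⟩, ⟨0,-1⟩; ⟨1,-1⟩, ⟨0,-1⟩, ⟨-1,0⟩; ⟨0,-1⟩, ⟨1,0⟩, ⟨1,-1⟩],
  !![⟨-1,1⟩, ⟨0,-1⟩, ⟨-1,0⟩; ⟨0,-1⟩, ⟨-1,0⟩, ⟨-1,1⟩; ⟨-1,0⟩, ⟨-1,1⟩, ⟨0,-1⟩],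
  !![⟨1,0⟩, ⟨1,-1⟩, ⟨0,-1⟩; ⟨-1,1⟩, ⟨0,-1⟩, ⟨1,0⟩; ⟨0,-1⟩, ⟨-1,0⟩, ⟨1,-1⟩],
  !![⟨0,0⟩, ⟨0,0⟩, ⟨-2,0⟩; ⟨2,0⟩, ⟨0,0⟩, ⟨0,0⟩; ⟨0,0⟩, ⟨-2,0⟩, ⟨0,0⟩],
  !![⟨1,-1⟩, ⟨0,-1⟩, ⟨-1,0⟩; ⟨0,-1⟩, ⟨1,0⟩, ⟨1,-1⟩; ⟨1,0⟩, ⟨-1,1⟩, ⟨0,-1⟩],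
  !![⟨-1,0⟩, ⟨1,-1⟩, ⟨0,-1⟩; ⟨-1,1⟩, ⟨0,1⟩, ⟨-1,0⟩; ⟨0,1⟩, ⟨-1,0⟩, ⟨1,-1⟩]]

def vertZ : Fin 12 → VecZ := ![![⟨0,0⟩, ⟨1,0⟩, ⟨0,1⟩], ![⟨1,0⟩, ⟨0,1⟩, ⟨0,0⟩], ![⟨0,1⟩, ⟨0,0⟩, ⟨1,0⟩], ![⟨0,0⟩, ⟨1,0⟩, ⟨0,-1⟩], ![⟨1,0⟩, ⟨0,-1⟩, ⟨0,0⟩], ![⟨0,1⟩, ⟨0,0⟩, ⟨-1,0⟩], ![⟨0,0⟩, ⟨-1,0⟩, ⟨0,1⟩], ![⟨-1,0⟩, ⟨0,1⟩, ⟨0,0⟩], ![⟨0,-1⟩, ⟨0,0⟩, ⟨1,0⟩], ![⟨0,0⟩, ⟨-1,0⟩, ⟨0,-1⟩], ![⟨-1,0⟩, ⟨0,-1⟩, ⟨0,0⟩], ![⟨0,-1⟩, ⟨0,0⟩, ⟨-1,0⟩]]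

def axZ : Fin 31 → VecZ := ![![⟨0,0⟩, ⟨1,-1⟩, ⟨-1,0⟩], ![⟨1,-1⟩, ⟨0,0⟩, ⟨-2,1⟩], ![⟨1,-1⟩, ⟨1,0⟩, ⟨0,0⟩], ![⟨1,-1⟩, ⟨0,-1⟩, ⟨-1,0⟩], ![⟨0,0⟩, ⟨1,0⟩, ⟨2,-1⟩], ![⟨1,0⟩, ⟨1,0⟩, ⟨1,0⟩], ![⟨1,0⟩, ⟨0,0⟩, ⟨1,1⟩], ![⟨0,1⟩, ⟨1,0⟩, ⟨1,1⟩], ![⟨1,-1⟩, ⟨-1,0⟩, ⟨0,0⟩], ![⟨0,0⟩, ⟨1,-1⟩, ⟨1,0⟩], ![⟨1,0⟩, ⟨-2,1⟩, ⟨0,0⟩], ![⟨1,0⟩, ⟨2,-1⟩, ⟨0,0⟩], ![⟨0,0⟩, ⟨1,0⟩, ⟨0,0⟩], ![⟨0,1⟩, ⟨-1,0⟩, ⟨1,1⟩], ![⟨1,0⟩, ⟨1,0⟩, ⟨-1,0⟩], ![⟨1,0⟩, ⟨-1,0⟩, ⟨1,0⟩], ![⟨1,0⟩, ⟨-1,1⟩,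 ⟨2,-1⟩], ![⟨0,0⟩, ⟨1,0⟩, ⟨-2,1⟩], ![⟨0,0⟩, ⟨0,0⟩, ⟨1,0⟩], ![⟨1,0⟩, ⟨0,0⟩, ⟨-1,-1⟩], ![⟨1,-1⟩, ⟨0,0⟩, ⟨2,-1⟩], ![⟨1,0⟩, ⟨-1,0⟩, ⟨-1,0⟩], ![⟨1,-1⟩, ⟨0,1⟩, ⟨1,0⟩], ![⟨0,1⟩, ⟨-1,0⟩, ⟨-1,-1⟩], ![⟨1,0⟩, ⟨0,0⟩, ⟨0,0⟩], ![⟨1,-1⟩, ⟨0,1⟩, ⟨-1,0⟩], ![⟨1,0⟩, ⟨1,-1⟩, ⟨2,-1⟩], ![⟨1,-1⟩, ⟨0,-1⟩, ⟨1,0⟩], ![⟨1,0⟩, ⟨-1,1⟩, ⟨-2,1⟩], ![⟨0,1⟩, ⟨1,0⟩, ⟨-1,-1⟩], ![⟨1,0⟩, ⟨1,-1⟩, ⟨-2,1⟩]]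

def axOf : Fin 60 → Fin 31 := ![0, 0, 0, 0, 0, 1, 2, 3, 4, 5, 6, 7, 8, 5, 9, 10, 2, 11, 12, 8, 13, 1, 9, 11, 14, 1, 15, 16, 17, 8, 18, 6, 1, 19, 20, 20, 21, 22, 8, 4, 19, 9, 23, 2, 21, 24, 25, 26, 27, 28, 15, 9, 29, 10, 20, 30, 20, 14, 2, 17]

def rw1 : Fin 60 → Fin 3 := ![0, 0, 0, 0, 0, 0, 0, 0, 0, 0, 0, 0, 0, 0, 0, 0, 0, 0, 0, 0, 0, 0, 0, 0, 0, 0, 0, 0, 0, 0, 0, 0, 0, 0, 0, 0, 0, 0, 0, 0, 0, 0, 0, 0, 0, 1, 0, 0, 0, 0, 0, 0, 0, 0, 0, 0, 0, 0, 0, 0]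

def rw2 : Fin 60 → Fin 3 := ![1, 1, 1, 1, 1, 1, 2, 1, 1, 1, 1, 1, 2, 1, 1, 2, 2, 2, 2, 2, 1, 1, 1, 2, 1, 1, 1, 1, 1, 2, 1, 1, 1, 1, 1, 1, 1, 1, 2, 1, 1, 1, 1, 2, 1, 2, 1, 1, 1, 1, 1, 1, 1, 2, 1, 1, 1, 1, 2, 1]

def lam : Fin 60 → Zphi := ![⟨1,1⟩, ⟨-4,0⟩, ⟨-4,-4⟩, ⟨-4,-4⟩, ⟨-4,0⟩, ⟨-4,0⟩, ⟨-4,0⟩, ⟨-4,0⟩, ⟨4,0⟩, ⟨4,0⟩, ⟨4,0⟩, ⟨4,0⟩, ⟨4,0⟩, ⟨4,0⟩, ⟨4,0⟩, ⟨4,0⟩, ⟨-4,-4⟩, ⟨-4,0⟩, ⟨-16,0⟩, ⟨4,4⟩, ⟨4,0⟩, ⟨-4,-4⟩, ⟨4,4⟩, ⟨-4,0⟩, ⟨-4,0⟩, ⟨-4,-4⟩, ⟨4,0⟩, ⟨4,0⟩, ⟨-4,0⟩, ⟨4,4⟩, ⟨16,0⟩, ⟨4,0⟩, ⟨-4,0⟩,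 ⟨-4,0⟩, ⟨4,0⟩, ⟨4,0⟩, ⟨-4,0⟩, ⟨4,0⟩, ⟨4,0⟩, ⟨4,0⟩, ⟨-4,0⟩, ⟨4,0⟩, ⟨-4,0⟩, ⟨-4,0⟩, ⟨-4,0⟩, ⟨16,0⟩, ⟨-4,0⟩, ⟨4,0⟩, ⟨4,0⟩, ⟨-4,0⟩, ⟨4,0⟩, ⟨4,4⟩, ⟨-4,0⟩, ⟨4,0⟩, ⟨4,4⟩, ⟨-4,0⟩, ⟨4,4⟩, ⟨-4,0⟩, ⟨-4,-4⟩, ⟨-4,0⟩]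

def fl1 : Fin 60 → Fin 12 := ![0, 0, 0, 0, 0, 1, 1, 1, 1, 1, 2, 2, 2, 2, 2, 3, 3, 3, 3, 3, 4, 4, 4, 4, 4, 5, 5, 5, 5, 5, 6, 6, 6, 6, 6, 7, 7, 7, 7, 7, 8, 8, 8, 8, 8, 9, 9, 9, 9, 9, 10, 10, 10, 10, 10, 11, 11, 11, 11, 11]

def fl2 : Fin 60 → Fin 12 := ![6, 2, 1, 7, 8, 0, 2, 3, 5, 7, 0, 1, 4, 5, 6, 1, 5, 7, 9, 11, 2, 5, 6, 9, 10, 1, 2, 3, 4, 9, 0, 2, 4, 8, 10, 0, 1, 3, 8, 11, 0, 6, 7, 10, 11, 3, 4, 5, 10, 11, 4, 6, 8, 9, 11, 3, 7, 8, 9, 10]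

def sig : Fin 60 → Fin 12 → Fin 12 := ![![0, 1, 2, 3, 4, 5, 6, 7, 8, 9, 10, 11], ![0, 7, 1, 11, 5, 3, 2, 8, 6, 9, 4, 10], ![0, 8, 7, 10, 3, 11, 1, 6, 2, 9, 5, 4], ![0, 6, 8, 4, 11, 10, 7, 2, 1, 9, 3, 5], ![0, 2, 6, 5, 10, 4, 8, 1, 7, 9, 11, 3], ![1, 5, 2, 9, 6, 4, 0, 3, 7, 10, 8, 11], ![1, 3, 5, 11, 4, 9, 2, 7, 0, 10, 6, 8], ![1, 0, 7, 6, 11, 8, 3, 2, 5, 10, 9, 4], ![1, 7, 3, 8, 9, 11, 5, 0, 2, 10, 4, 6], ![1, 2, 0, 4, 8, 6, 7, 5, 3, 10, 11, 9], ![2, 4, 6, 9, 8, 10, 0, 5, 1, 11, 7, 3], ![2, 6, 0, 10, 7, 8, 1, 4, 5, 11, 3, 9], ![2, 1, 5, 7, 9, 3, 4, 0, 6, 11, 10, 8], ![2, 0, 1, 8, 3, 7, 5, 6, 4, 11, 9, 10], ![2, 5, 4, 3, 10, 9, 6, 1, 0, 11, 8, 7], ![3, 9, 5, 10, 2, 4,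 1, 11, 7, 6, 0, 8], ![3, 11, 9, 8, 4, 10, 5, 7, 1, 6, 2, 0], ![3, 5, 1, 4, 0, 2, 7, 9, 11, 6, 8, 10], ![3, 7, 11, 0, 10, 8, 9, 1, 5, 6, 4, 2], ![3, 1, 7, 2, 8, 0, 11, 5, 9, 6, 10, 4], ![4, 10, 6, 11, 0, 8, 2, 9, 5, 7, 1, 3], ![4, 6, 2, 8, 1, 0, 5, 10, 9, 7, 3, 11], ![4, 9, 10, 3, 8, 11, 6, 5, 2, 7, 0, 1], ![4, 2, 5, 0, 3, 1, 9, 6, 10, 7, 11, 8], ![4, 5, 9, 1, 11, 3, 10, 2, 6, 7, 8, 0], ![5, 4, 2, 10, 0, 6, 1, 9, 3, 8, 7, 11], ![5, 9, 4, 11, 6, 10, 2, 3, 1, 8, 0, 7], ![5, 2, 1, 6, 7, 0, 3, 4, 9, 8, 11, 10], ![5, 3, 9, 7, 10, 11, 4, 1, 2, 8, 6, 0], ![5, 1, 3, 0, 11, 7, 9, 2, 4, 8, 10, 6], ![6, 10, 8, 9, 7, 11, 0, 4, 2, 3, 1, 5], ![6, 8, 0, 11, 1, 7, 2, 10, 4,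 3, 5, 9], ![6, 0, 2, 7, 5, 1, 4, 8, 10, 3, 9, 11], ![6, 4, 10, 5, 11, 9, 8, 2, 0, 3, 7, 1], ![6, 2, 4, 1, 9, 5, 10, 0, 8, 3, 11, 7], ![7, 3, 1, 9, 2, 5, 0, 11, 8, 4, 6, 10], ![7, 11, 3, 10, 5, 9, 1, 8, 0, 4, 2, 6], ![7, 8, 11, 6, 9, 10, 3, 0, 1, 4, 5, 2], ![7, 1, 0, 5, 6, 2, 8, 3, 11, 4, 10, 9], ![7, 0, 8, 2, 10, 6, 11, 1, 3, 4, 9, 5], ![8, 11, 7, 9, 1, 3, 0, 10, 6, 5, 2, 4], ![8, 7, 0, 3, 2, 1, 6, 11, 10, 5, 4, 9], ![8, 10, 11, 4, 3, 9, 7, 6, 0, 5, 1, 2], ![8, 0, 6, 1, 4, 2, 10, 7, 11, 5, 9, 3], ![8, 6, 10, 2, 9, 4, 11, 0, 7, 5, 3, 1], ![9, 4, 5, 6, 1, 2, 3, 10, 11, 0, 7, 8], ![9, 11, 10, 7, 6, 8, 4, 3, 5, 0, 2, 1], ![9, 10, 4, 8, 2, 6, 5, 11, 3, 0, 1, 7],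 ![9, 3, 11, 1, 8, 7, 10, 5, 4, 0, 6, 2], ![9, 5, 3, 2, 7, 1, 11, 4, 10, 0, 8, 6], ![10, 8, 6, 7, 2, 0, 4, 11, 9, 1, 5, 3], ![10, 11, 8, 3, 0, 7, 6, 9, 4, 1, 2, 5], ![10, 9, 11, 5, 7, 3, 8, 4, 6, 1, 0, 2], ![10, 6, 4, 0, 5, 2, 9, 8, 11, 1, 3, 7], ![10, 4, 9, 2, 3, 5, 11, 6, 8, 1, 7, 0], ![11, 10, 9, 6, 5, 4, 3, 8, 7, 2, 1, 0], ![11, 9, 3, 4, 1, 5, 7, 10, 8, 2, 0, 6], ![11, 3, 7, 5, 0, 1, 8, 9, 10, 2, 6, 4], ![11, 8, 10, 0, 4, 6, 9, 7, 3, 2, 5, 1], ![11, 7, 8, 1, 6, 0, 10, 3, 9, 2, 4, 5]]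

def sigv : Fin 60 → Fin 12 → Fin 12 := ![![0, 1, 2, 3, 4, 5, 6, 7, 8, 9, 10, 11], ![0, 2, 6, 5, 10, 4, 8, 1, 7, 9, 11, 3], ![0, 6, 8, 4, 11, 10, 7, 2, 1, 9, 3, 5], ![0, 8, 7, 10, 3, 11, 1, 6, 2, 9, 5, 4], ![0, 7, 1, 11, 5, 3, 2, 8, 6, 9, 4, 10], ![6, 0, 2, 7, 5, 1, 4, 8, 10, 3, 9, 11], ![8, 0, 6, 1, 4, 2, 10, 7, 11, 5, 9, 3], ![1, 0, 7, 6, 11, 8, 3, 2, 5, 10, 9, 4], ![7, 0, 8, 2, 10, 6, 11, 1, 3, 4, 9, 5], ![2, 0, 1, 8, 3, 7, 5, 6, 4, 11, 9, 10], ![6, 8, 0, 11, 1, 7, 2, 10, 4, 3, 5, 9], ![2, 6, 0, 10, 7, 8, 1, 4, 5, 11, 3, 9], ![7, 1, 0, 5, 6, 2, 8, 3, 11, 4, 10, 9], ![1, 2, 0, 4, 8, 6, 7, 5, 3, 10, 11, 9], ![8, 7, 0, 3, 2, 1, 6, 11, 10, 5, 4, 9], ![10, 6, 4, 0, 5, 2,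 9, 8, 11, 1, 3, 7], ![11, 8, 10, 0, 4, 6, 9, 7, 3, 2, 5, 1], ![4, 2, 5, 0, 3, 1, 9, 6, 10, 7, 11, 8], ![3, 7, 11, 0, 10, 8, 9, 1, 5, 6, 4, 2], ![5, 1, 3, 0, 11, 7, 9, 2, 4, 8, 10, 6], ![4, 10, 6, 11, 0, 8, 2, 9, 5, 7, 1, 3], ![5, 4, 2, 10, 0, 6, 1, 9, 3, 8, 7, 11], ![10, 11, 8, 3, 0, 7, 6, 9, 4, 1, 2, 5], ![3, 5, 1, 4, 0, 2, 7, 9, 11, 6, 8, 10], ![11, 3, 7, 5, 0, 1, 8, 9, 10, 2, 6, 4], ![4, 6, 2, 8, 1, 0, 5, 10, 9, 7, 3, 11], ![10, 8, 6, 7, 2, 0, 4, 11, 9, 1, 5, 3], ![5, 2, 1, 6, 7, 0, 3, 4, 9, 8, 11, 10], ![11, 7, 8, 1, 6, 0, 10, 3, 9, 2, 4, 5], ![3, 1, 7, 2, 8, 0, 11, 5, 9, 6, 10, 4], ![6, 10, 8, 9, 7, 11, 0, 4, 2, 3, 1, 5], ![2, 4, 6, 9, 8, 10, 0, 5, 1,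 11, 7, 3], ![1, 5, 2, 9, 6, 4, 0, 3, 7, 10, 8, 11], ![8, 11, 7, 9, 1, 3, 0, 10, 6, 5, 2, 4], ![7, 3, 1, 9, 2, 5, 0, 11, 8, 4, 6, 10], ![6, 2, 4, 1, 9, 5, 10, 0, 8, 3, 11, 7], ![8, 6, 10, 2, 9, 4, 11, 0, 7, 5, 3, 1], ![7, 8, 11, 6, 9, 10, 3, 0, 1, 4, 5, 2], ![2, 1, 5, 7, 9, 3, 4, 0, 6, 11, 10, 8], ![1, 7, 3, 8, 9, 11, 5, 0, 2, 10, 4, 6], ![6, 4, 10, 5, 11, 9, 8, 2, 0, 3, 7, 1], ![2, 5, 4, 3, 10, 9, 6, 1, 0, 11, 8, 7], ![8, 10, 11, 4, 3, 9, 7, 6, 0, 5, 1, 2], ![1, 3, 5, 11, 4, 9, 2, 7, 0, 10, 6, 8], ![7, 11, 3, 10, 5, 9, 1, 8, 0, 4, 2, 6], ![9, 4, 5, 6, 1, 2, 3, 10, 11, 0, 7, 8], ![9, 11, 10, 7, 6, 8, 4, 3, 5, 0, 2, 1], ![9, 10, 4, 8, 2, 6, 5, 11, 3, 0, 1, 7],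 ![9, 3, 11, 1, 8, 7, 10, 5, 4, 0, 6, 2], ![9, 5, 3, 2, 7, 1, 11, 4, 10, 0, 8, 6], ![5, 9, 4, 11, 6, 10, 2, 3, 1, 8, 0, 7], ![4, 9, 10, 3, 8, 11, 6, 5, 2, 7, 0, 1], ![10, 9, 11, 5, 7, 3, 8, 4, 6, 1, 0, 2], ![3, 9, 5, 10, 2, 4, 1, 11, 7, 6, 0, 8], ![11, 9, 3, 4, 1, 5, 7, 10, 8, 2, 0, 6], ![11, 10, 9, 6, 5, 4, 3, 8, 7, 2, 1, 0], ![10, 4, 9, 2, 3, 5, 11, 6, 8, 1, 7, 0], ![4, 5, 9, 1, 11, 3, 10, 2, 6, 7, 8, 0], ![3, 11, 9, 8, 4, 10, 5, 7, 1, 6, 2, 0], ![5, 3, 9, 7, 10, 11, 4, 1, 2, 8, 6, 0]]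


def dot3 (u v : VecZ) : Zphi := u 0 * v 0 + u 1 * v 1 + u 2 * v 2

def cz (u v : VecZ) : VecZ :=
  ![u 1 * v 2 - u 2 * v 1, u 2 * v 0 - u 0 * v 2, u 0 * v 1 - u 1 * v 0]

def det3 (M : MatZ) : Zphi :=
  M 0 0 * (M 1 1 * M 2 2 - M 1 2 * M 2 1) - M 0 1 * (M 1 0 * M 2 2 - M 1 2 * M 2 0)
    + M 0 2 * (M 1 0 * M 2 1 - M 1 1 * M 2 0)

def mtm (M : MatZ) : MatZ := Matrix.of fun i j => dot3 (fun k => M k i) (fun k => M k j)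

def mv3 (M : MatZ) (v : VecZ) : VecZ := fun i => dot3 (fun k => M i k) v

def smul2 (w : VecZ) : VecZ := fun t => ⟨2,0⟩ * w t

def fourI : MatZ := !![⟨4,0⟩, ⟨0,0⟩, ⟨0,0⟩; ⟨0,0⟩, ⟨4,0⟩, ⟨0,0⟩; ⟨0,0⟩, ⟨0,0⟩, ⟨4,0⟩]
def twoI : MatZ := !![⟨2,0⟩, ⟨0,0⟩, ⟨0,0⟩; ⟨0,0⟩, ⟨2,0⟩, ⟨0,0⟩; ⟨0,0⟩, ⟨0,0⟩, ⟨2,0⟩]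

def vz1 : VecZ := ![⟨0,0⟩, ⟨1,0⟩, ⟨0,1⟩]
def vz2 : VecZ := ![⟨0,0⟩, ⟨-1,0⟩, ⟨0,1⟩]

set_option maxHeartbeats 4000000 in
set_option maxRecDepth 100000 in
theorem D1 : ∀ j, mtm (Ms j) = fourI ∧ det3 (Ms j) = ⟨8,0⟩ := by decide
set_option maxHeartbeats 4000000 in
set_option maxRecDepth 100000 in
theorem D2 : ∀ j i, mv3 (Ms j) (vertZ i) = smul2 (vertZ (sig j i)) := by decide
set_option maxHeartbeats 4000000 in
set_option maxRecDepth 100000 in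
theorem D2v : ∀ j i, sig j (sigv j i) = i := by decide

def vsubZ (u w : VecZ) : VecZ := fun t => u t - w t
def dd (u w : VecZ) : Zphi := dot3 (vsubZ u w) (vsubZ u w)
def dmat (j : Fin 60) : MatZ := Matrix.of fun i t => Ms j i t - twoI i t
def pz : MatZ := Matrix.of ![vz1, vz2, cz vz1 vz2]
def zv : VecZ := fun _ => ⟨0,0⟩

set_option maxHeartbeats 4000000 in
set_option maxRecDepth 100000 in
theorem D3 : ∀ j, mv3 (Ms j) vz1 = smul2 (vertZ (fl1 j)) ∧ mv3 (Ms j) vz2 = smul2 (vertZ (fl2 j)) := by decide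

set_option maxHeartbeats 4000000 in
set_option maxRecDepth 100000 in
theorem D4 : ∀ j j' : Fin 60, fl1 j = fl1 j' → fl2 j = fl2 j' → j = j' := by decide

set_option maxHeartbeats 4000000 in
set_option maxRecDepth 100000 in
theorem D5 : ∀ i i' : Fin 12, vertZ i = vertZ i' → i = i' := by decide

set_option maxHeartbeats 4000000 in
set_option maxRecDepth 100000 in
theorem D6 : ∀ i i' : Fin 12, dd (vertZ i) (vertZ i') = ⟨4,0⟩ → ∃ j, fl1 j = i ∧ fl2 j = i' := by decide

set_option maxHeartbeats 4000000 in
set_option maxRecDepth 100000 in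
theorem D7 : ∀ j, j ≠ 0 → (cz (fun t => dmat j (rw1 j) t) (fun t => dmat j (rw2 j) t) = fun t => lam j * axZ (axOf j) t) ∧ (fun t => lam j * axZ (axOf j) t) ≠ zv := by decide

set_option maxHeartbeats 4000000 in
set_option maxRecDepth 100000 in
theorem D8 : ∀ j, mv3 (Ms j) (axZ (axOf j)) = smul2 (axZ (axOf j)) := by decide

set_option maxHeartbeats 4000000 in
set_option maxRecDepth 100000 in
theorem D9 : ∀ k k' : Fin 31, cz (axZ k) (axZ k') = zv → k = k' := by decide

set_option maxHeartbeats 4000000 in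
set_option maxRecDepth 100000 in
theorem D10 : ∀ k : Fin 31, (Finset.filter (fun j => j = 0 ∨ axOf j = k) Finset.univ).card = 2 ∨
    (Finset.filter (fun j => j = 0 ∨ axOf j = k) Finset.univ).card = 3 ∨
    (Finset.filter (fun j => j = 0 ∨ axOf j = k) Finset.univ).card = 5 := by decide

set_option maxHeartbeats 1000000 in
theorem Dpz : det3 pz ≠ ⟨0,0⟩ := by decide

set_option maxHeartbeats 1000000 in
theorem Ddist : dd vz1 vz2 = ⟨4,0⟩ := by decide

set_option maxHeartbeats 1000000 in
theorem DM0 : Ms 0 = twoI := by decide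

set_option maxHeartbeats 1000000 in
theorem Dvz1 : vz1 = vertZ 0 := by decide

set_option maxHeartbeats 1000000 in
theorem Dvz2 : vz2 = vertZ 6 := by decide


noncomputable def vmap (u : VecZ) : EuclideanSpace ℝ (Fin 3) := WithLp.toLp 2 (fun i => toR (u i))

noncomputable def mmap (N : MatZ) : Matrix (Fin 3) (Fin 3) ℝ := ((2:ℝ)⁻¹) • N.map toR

theorem toR_mk (a b : ℤ) : toR ⟨a,b⟩ = (a:ℝ) + (b:ℝ) * φ := rfl

theorem vmap_inj : Function.Injective vmap := fun u w h =>
  funext fun i => toR_injective (congrFun (congrArg WithLp.ofLp h) i)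

def crR (u v : Fin 3 → ℝ) : Fin 3 → ℝ :=
  ![u 1 * v 2 - u 2 * v 1, u 2 * v 0 - u 0 * v 2, u 0 * v 1 - u 1 * v 0]

theorem vmap_cz (u w : VecZ) : crR (vmap u) (vmap w) = vmap (cz u w) := by
  funext i; fin_cases i <;> simp [crR, cz, vmap, _root_.map_sub, _root_.map_mul]

theorem vmap_dot (u w : VecZ) : (vmap u) ⬝ᵥ (vmap w) = toR (dot3 u w) := by
  simp [dotProduct, Fin.sum_univ_three, vmap, dot3, _root_.map_add, _root_.map_mul]

theorem triple (u v w : Fin 3 → ℝ) : crR u v ⬝ᵥ w = Matrix.det (Matrix.of ![u, v, w]) := by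
  rw [Matrix.det_fin_three]
  simp [crR, dotProduct, Fin.sum_univ_three]
  ring

theorem rows_mul (A : Matrix (Fin 3) (Fin 3) ℝ) (u v w : Fin 3 → ℝ) :
    Matrix.of ![A.mulVec u, A.mulVec v, A.mulVec w] = Matrix.of ![u,v,w] * Aᵀ := by
  ext i j
  fin_cases i <;>
    simp [Matrix.mul_apply, Matrix.mulVec, dotProduct, Fin.sum_univ_three,
      Matrix.transpose_apply] <;> ring

theorem dot_rot {A : Matrix (Fin 3) (Fin 3) ℝ} (h : Aᵀ * A = 1) (x y : Fin 3 → ℝ) :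
    A.mulVec x ⬝ᵥ A.mulVec y = x ⬝ᵥ y := by
  rw [← Matrix.vecMul_transpose, dotProduct_mulVec, Matrix.vecMul_vecMul, h,
    Matrix.vecMul_one]

theorem rot_cross {A : Matrix (Fin 3) (Fin 3) ℝ} (hA : IsRotation A) (u v : Fin 3 → ℝ) :
    A.mulVec (crR u v) = crR (A.mulVec u) (A.mulVec v) := by
  obtain ⟨ho, hdet⟩ := hA
  have hAA : A * Aᵀ = 1 := mul_eq_one_comm.mp ho
  funext i
  have key : ∀ w, A.mulVec (crR u v) ⬝ᵥ A.mulVec w = crR (A.mulVec u) (A.mulVec v) ⬝ᵥ A.mulVec w := by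
    intro w
    rw [dot_rot ho, triple, triple, rows_mul, Matrix.det_mul, Matrix.det_transpose, hdet, mul_one]
  have h2 := key (Aᵀ.mulVec (Pi.single i 1))
  rw [Matrix.mulVec_mulVec, hAA, Matrix.one_mulVec] at h2
  simpa using h2

theorem perp_perp (u w x : Fin 3 → ℝ) (h1 : u ⬝ᵥ x = 0) (h2 : w ⬝ᵥ x = 0) :
    crR (crR u w) x = 0 := by
  have hid : crR (crR u w) x = (u ⬝ᵥ x) • w - (w ⬝ᵥ x) • u := by
    funext i
    fin_cases i <;>
      simp [crR, dotProduct, Fin.sum_univ_three, Pi.smul_apply, smul_eq_mul] <;> ring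
  rw [hid, h1, h2]; simp

theorem cross_zero_para {a b : Fin 3 → ℝ} (h : crR a b = 0) (ha : a ≠ 0) :
    ∃ c : ℝ, b = c • a := by
  have h0 := congrFun h 0
  have h1 := congrFun h 1
  have h2 := congrFun h 2
  simp only [crR, Matrix.cons_val_zero, Matrix.cons_val_one, Matrix.head_cons, Pi.zero_apply,
    Matrix.cons_val_two, Matrix.tail_cons] at h0 h1 h2
  have hex : ∃ i, a i ≠ 0 := by
    by_contra hc
    push_neg at hc
    exact ha (funext fun i => hc i)
  obtain ⟨i, hi⟩ := hex
  have key : ∀ (x y d e : ℝ), d ≠ 0 → x * d = y * e → x = y / d * e := by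
    intro x y d e hd hxy
    field_simp
    linear_combination hxy
  fin_cases i
  · replace hi : a 0 ≠ 0 := hi
    refine ⟨b 0 / a 0, funext fun j => ?_⟩
    fin_cases j
    · show b 0 = b 0 / a 0 * a 0; exact key _ _ _ _ hi (by ring)
    · show b 1 = b 0 / a 0 * a 1; exact key _ _ _ _ hi (by linear_combination h2)
    · show b 2 = b 0 / a 0 * a 2; exact key _ _ _ _ hi (by linear_combination -h1)
  · replace hi : a 1 ≠ 0 := hi
    refine ⟨b 1 / a 1, funext fun j => ?_⟩
    fin_cases j
    · show b 0 = b 1 / a 1 * a 0; exact key _ _ _ _ hi (by linear_combination -h2)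
    · show b 1 = b 1 / a 1 * a 1; exact key _ _ _ _ hi (by ring)
    · show b 2 = b 1 / a 1 * a 2; exact key _ _ _ _ hi (by linear_combination h0)
  · replace hi : a 2 ≠ 0 := hi
    refine ⟨b 2 / a 2, funext fun j => ?_⟩
    fin_cases j
    · show b 0 = b 2 / a 2 * a 0; exact key _ _ _ _ hi (by linear_combination h1)
    · show b 1 = b 2 / a 2 * a 1; exact key _ _ _ _ hi (by linear_combination -h0)
    · show b 2 = b 2 / a 2 * a 2; exact key _ _ _ _ hi (by ring)


theorem vertE0 : vertZ 0 = ![(⟨0,0⟩ : Zphi), (⟨1,0⟩ : Zphi), (⟨0,1⟩ : Zphi)] := by decide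

theorem vertL0 : vmap (vertZ 0) = ![0, (1:ℝ), (1:ℝ) * φ] := by
  rw [vertE0]; funext i; fin_cases i <;> norm_num [vmap, toR_mk]

theorem vertE1 : vertZ 1 = ![(⟨1,0⟩ : Zphi), (⟨0,1⟩ : Zphi), (⟨0,0⟩ : Zphi)] := by decide

theorem vertL1 : vmap (vertZ 1) = ![(1:ℝ), (1:ℝ) * φ, 0] := by
  rw [vertE1]; funext i; fin_cases i <;> norm_num [vmap, toR_mk]

theorem vertE2 : vertZ 2 = ![(⟨0,1⟩ : Zphi), (⟨0,0⟩ : Zphi), (⟨1,0⟩ : Zphi)] := by decide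

theorem vertL2 : vmap (vertZ 2) = ![(1:ℝ) * φ, 0, (1:ℝ)] := by
  rw [vertE2]; funext i; fin_cases i <;> norm_num [vmap, toR_mk]

theorem vertE3 : vertZ 3 = ![(⟨0,0⟩ : Zphi), (⟨1,0⟩ : Zphi), (⟨0,-1⟩ : Zphi)] := by decide

theorem vertL3 : vmap (vertZ 3) = ![0, (1:ℝ), (-1:ℝ) * φ] := by
  rw [vertE3]; funext i; fin_cases i <;> norm_num [vmap, toR_mk]

theorem vertE4 : vertZ 4 = ![(⟨1,0⟩ : Zphi), (⟨0,-1⟩ : Zphi), (⟨0,0⟩ : Zphi)] := by decide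

theorem vertL4 : vmap (vertZ 4) = ![(1:ℝ), (-1:ℝ) * φ, 0] := by
  rw [vertE4]; funext i; fin_cases i <;> norm_num [vmap, toR_mk]

theorem vertE5 : vertZ 5 = ![(⟨0,1⟩ : Zphi), (⟨0,0⟩ : Zphi), (⟨-1,0⟩ : Zphi)] := by decide

theorem vertL5 : vmap (vertZ 5) = ![(1:ℝ) * φ, 0, (-1:ℝ)] := by
  rw [vertE5]; funext i; fin_cases i <;> norm_num [vmap, toR_mk]

theorem vertE6 : vertZ 6 = ![(⟨0,0⟩ : Zphi), (⟨-1,0⟩ : Zphi), (⟨0,1⟩ : Zphi)] := by decide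

theorem vertL6 : vmap (vertZ 6) = ![0, (-1:ℝ), (1:ℝ) * φ] := by
  rw [vertE6]; funext i; fin_cases i <;> norm_num [vmap, toR_mk]

theorem vertE7 : vertZ 7 = ![(⟨-1,0⟩ : Zphi), (⟨0,1⟩ : Zphi), (⟨0,0⟩ : Zphi)] := by decide

theorem vertL7 : vmap (vertZ 7) = ![(-1:ℝ), (1:ℝ) * φ, 0] := by
  rw [vertE7]; funext i; fin_cases i <;> norm_num [vmap, toR_mk]

theorem vertE8 : vertZ 8 = ![(⟨0,-1⟩ : Zphi), (⟨0,0⟩ : Zphi), (⟨1,0⟩ : Zphi)] := by decide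

theorem vertL8 : vmap (vertZ 8) = ![(-1:ℝ) * φ, 0, (1:ℝ)] := by
  rw [vertE8]; funext i; fin_cases i <;> norm_num [vmap, toR_mk]

theorem vertE9 : vertZ 9 = ![(⟨0,0⟩ : Zphi), (⟨-1,0⟩ : Zphi), (⟨0,-1⟩ : Zphi)] := by decide

theorem vertL9 : vmap (vertZ 9) = ![0, (-1:ℝ), (-1:ℝ) * φ] := by
  rw [vertE9]; funext i; fin_cases i <;> norm_num [vmap, toR_mk]

theorem vertE10 : vertZ 10 = ![(⟨-1,0⟩ : Zphi), (⟨0,-1⟩ : Zphi), (⟨0,0⟩ : Zphi)] := by decide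

theorem vertL10 : vmap (vertZ 10) = ![(-1:ℝ), (-1:ℝ) * φ, 0] := by
  rw [vertE10]; funext i; fin_cases i <;> norm_num [vmap, toR_mk]

theorem vertE11 : vertZ 11 = ![(⟨0,-1⟩ : Zphi), (⟨0,0⟩ : Zphi), (⟨-1,0⟩ : Zphi)] := by decide

theorem vertL11 : vmap (vertZ 11) = ![(-1:ℝ) * φ, 0, (-1:ℝ)] := by
  rw [vertE11]; funext i; fin_cases i <;> norm_num [vmap, toR_mk]

theorem Vicos_eq : Vicos = Set.range (fun i : Fin 12 => vmap (vertZ i)) := by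
  ext p
  constructor
  · rintro ⟨s1, s2, (rfl|rfl), (rfl|rfl), (h|h|h)⟩
    · exact ⟨0, WithLp.ofLp_injective 2 (vertL0.trans h.symm)⟩
    · exact ⟨1, WithLp.ofLp_injective 2 (vertL1.trans h.symm)⟩
    · exact ⟨2, WithLp.ofLp_injective 2 (vertL2.trans h.symm)⟩
    · exact ⟨3, WithLp.ofLp_injective 2 (vertL3.trans h.symm)⟩
    · exact ⟨4, WithLp.ofLp_injective 2 (vertL4.trans h.symm)⟩
    · exact ⟨5, WithLp.ofLp_injective 2 (vertL5.trans h.symm)⟩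
    · exact ⟨6, WithLp.ofLp_injective 2 (vertL6.trans h.symm)⟩
    · exact ⟨7, WithLp.ofLp_injective 2 (vertL7.trans h.symm)⟩
    · exact ⟨8, WithLp.ofLp_injective 2 (vertL8.trans h.symm)⟩
    · exact ⟨9, WithLp.ofLp_injective 2 (vertL9.trans h.symm)⟩
    · exact ⟨10, WithLp.ofLp_injective 2 (vertL10.trans h.symm)⟩
    · exact ⟨11, WithLp.ofLp_injective 2 (vertL11.trans h.symm)⟩
  · rintro ⟨i, rfl⟩
    fin_cases i
    · exact ⟨1, 1, Or.inl rfl, Or.inl rfl, Or.inl vertL0⟩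
    · exact ⟨1, 1, Or.inl rfl, Or.inl rfl, Or.inr (Or.inl vertL1)⟩
    · exact ⟨1, 1, Or.inl rfl, Or.inl rfl, Or.inr (Or.inr vertL2)⟩
    · exact ⟨1, -1, Or.inl rfl, Or.inr rfl, Or.inl vertL3⟩
    · exact ⟨1, -1, Or.inl rfl, Or.inr rfl, Or.inr (Or.inl vertL4)⟩
    · exact ⟨1, -1, Or.inl rfl, Or.inr rfl, Or.inr (Or.inr vertL5)⟩
    · exact ⟨-1, 1, Or.inr rfl, Or.inl rfl, Or.inl vertL6⟩
    · exact ⟨-1, 1, Or.inr rfl, Or.inl rfl, Or.inr (Or.inl vertL7)⟩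
    · exact ⟨-1, 1, Or.inr rfl, Or.inl rfl, Or.inr (Or.inr vertL8)⟩
    · exact ⟨-1, -1, Or.inr rfl, Or.inr rfl, Or.inl vertL9⟩
    · exact ⟨-1, -1, Or.inr rfl, Or.inr rfl, Or.inr (Or.inl vertL10)⟩
    · exact ⟨-1, -1, Or.inr rfl, Or.inr rfl, Or.inr (Or.inr vertL11)⟩


theorem act_mmap_vmap {N : MatZ} {u w : VecZ} (h : mv3 N u = smul2 w) :
    act (mmap N) (vmap u) = vmap w := by
  ext i
  have hce : toR (mv3 N u i) = toR (smul2 w i) := by rw [h]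
  simp only [mv3, dot3, smul2, _root_.map_add, _root_.map_mul] at hce
  have h2 : toR ⟨2,0⟩ = (2:ℝ) := by rw [toR_mk]; norm_num
  rw [h2] at hce
  show ((2:ℝ)⁻¹ • (N.map toR)).mulVec (vmap u) i = toR (w i)
  simp only [Matrix.mulVec, dotProduct, Fin.sum_univ_three, Matrix.smul_apply,
    Matrix.map_apply, smul_eq_mul, vmap, WithLp.ofLp_toLp] at hce ⊢
  linarith [hce]

theorem mtm_eq (M : MatZ) : Mᵀ * M = mtm M := by
  refine Matrix.ext fun i j => ?_
  simp only [mtm, dot3, Matrix.mul_apply, Fin.sum_univ_three, Matrix.transpose_apply,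
    Matrix.of_apply]


theorem det3_eq (M : MatZ) : M.det = det3 M := by
  rw [Matrix.det_fin_three]; simp only [det3]; ring

theorem map_fourI : fourI.map toR = (4:ℝ) • (1 : Matrix (Fin 3) (Fin 3) ℝ) := by
  refine Matrix.ext fun i j => ?_
  rw [Matrix.map_apply, Matrix.smul_apply, Matrix.one_apply]
  by_cases h : i = j
  · subst h
    rw [if_pos rfl]
    have e : fourI i i = ⟨4,0⟩ := by fin_cases i <;> rfl
    rw [e, toR_mk]
    norm_num
  · rw [if_neg h]
    have e : fourI i j = ⟨0,0⟩ := by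
      fin_cases i <;> fin_cases j <;> first | rfl | (exact absurd rfl h)
    rw [e, toR_mk]
    norm_num

theorem isRot (j : Fin 60) : IsRotation (mmap (Ms j)) := by
  obtain ⟨h1, h2⟩ := D1 j
  constructor
  · show (mmap (Ms j))ᵀ * mmap (Ms j) = 1
    rw [mmap, Matrix.transpose_smul, Matrix.smul_mul, Matrix.mul_smul,
      ← Matrix.transpose_map, ← Matrix.map_mul, mtm_eq, h1, map_fourI]
    rw [smul_smul, smul_smul]
    norm_num
  · show (mmap (Ms j)).det = 1
    have hmd : ((Ms j).map toR).det = toR ((Ms j).det) := (RingHom.map_det toR (Ms j)).symm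
    rw [mmap, Matrix.det_smul, hmd, det3_eq, h2, toR_mk]
    norm_num

theorem memG (j : Fin 60) : mmap (Ms j) ∈ Gicos := by
  refine ⟨isRot j, ?_⟩
  have key : ∀ i, act (mmap (Ms j)) (vmap (vertZ i)) = vmap (vertZ (sig j i)) :=
    fun i => act_mmap_vmap (D2 j i)
  rw [Vicos_eq]
  apply Set.eq_of_subset_of_subset
  · rintro q ⟨p, ⟨i, rfl⟩, rfl⟩
    exact ⟨sig j i, (key i).symm⟩
  · rintro q ⟨i, rfl⟩
    refine ⟨vmap (vertZ (sigv j i)), ⟨sigv j i, rfl⟩, ?_⟩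
    rw [key (sigv j i), D2v]

theorem unique_rot {A B : Matrix (Fin 3) (Fin 3) ℝ} (hA : IsRotation A) (hB : IsRotation B)
    (h1 : A.mulVec (vmap vz1) = B.mulVec (vmap vz1))
    (h2 : A.mulVec (vmap vz2) = B.mulVec (vmap vz2)) : A = B := by
  have h3 : A.mulVec (crR (vmap vz1) (vmap vz2)) = B.mulVec (crR (vmap vz1) (vmap vz2)) := by
    rw [rot_cross hA, rot_cross hB, h1, h2]
  set P : Matrix (Fin 3) (Fin 3) ℝ := (Matrix.of ![vmap vz1, vmap vz2, crR (vmap vz1) (vmap vz2)])ᵀ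
    with hP
  have entry : ∀ (C : Matrix (Fin 3) (Fin 3) ℝ) i j,
      (C * P) i j = C.mulVec (![(vmap vz1 : Fin 3 → ℝ), vmap vz2, crR (vmap vz1) (vmap vz2)] j) i := by
    intro C i j
    simp only [hP, Matrix.mul_apply, Matrix.mulVec, dotProduct, Matrix.transpose_apply,
      Matrix.of_apply]
  have hABP : A * P = B * P := by
    ext i j
    rw [entry, entry]
    fin_cases j
    · exact congrFun h1 i
    · exact congrFun h2 i
    · exact congrFun h3 i
  have hPm : P = (Matrix.of ![vz1, vz2, cz vz1 vz2])ᵀ.map toR := by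
    rw [hP, vmap_cz]
    ext i j
    fin_cases j <;> rfl
  have hdet : P.det ≠ 0 := by
    have hmd : ((Matrix.of ![vz1, vz2, cz vz1 vz2])ᵀ.map toR).det =
        toR (((Matrix.of ![vz1, vz2, cz vz1 vz2])ᵀ).det) :=
      (RingHom.map_det toR _).symm
    rw [hPm, hmd, Matrix.det_transpose, det3_eq]
    intro hc
    exact Dpz (toR_injective (by
      rw [show toR (det3 pz) = toR (det3 (Matrix.of ![vz1, vz2, cz vz1 vz2])) from rfl, hc,
        show toR ⟨0,0⟩ = (0:ℝ) from _root_.map_zero toR]))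
  have hU : IsUnit P.det := isUnit_iff_ne_zero.mpr hdet
  calc A = A * (P * P⁻¹) := by rw [Matrix.mul_nonsing_inv _ hU, mul_one]
    _ = (A * P) * P⁻¹ := by rw [Matrix.mul_assoc]
    _ = (B * P) * P⁻¹ := by rw [hABP]
    _ = B * (P * P⁻¹) := by rw [Matrix.mul_assoc]
    _ = B := by rw [Matrix.mul_nonsing_inv _ hU, mul_one]

theorem vmap_sub (u w : VecZ) : vmap u - vmap w = vmap (vsubZ u w) := by
  ext i
  show vmap u i - vmap w i = _
  simp [vmap, vsubZ, _root_.map_sub]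

theorem Gicos_eq : Gicos = Set.range (fun j : Fin 60 => mmap (Ms j)) := by
  apply Set.eq_of_subset_of_subset
  · intro A hA
    obtain ⟨hrot, himg⟩ := hA
    have hmem : ∀ i : Fin 12, act A (vmap (vertZ i)) ∈ Vicos := by
      intro i
      rw [← himg]
      exact ⟨vmap (vertZ i), by rw [Vicos_eq]; exact ⟨i, rfl⟩, rfl⟩
    have hv1 := hmem 0
    have hv2 := hmem 6
    rw [Vicos_eq] at hv1 hv2
    obtain ⟨i, hi0⟩ := hv1
    obtain ⟨i', hi0'⟩ := hv2
    replace hi : vmap (vertZ i) = act A (vmap (vertZ 0)) := hi0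
    replace hi' : vmap (vertZ i') = act A (vmap (vertZ 6)) := hi0'
    rw [← Dvz1] at hi
    rw [← Dvz2] at hi'
    have hdist : dd (vertZ i) (vertZ i') = ⟨4,0⟩ := by
      apply toR_injective
      have e1 : toR (dd (vertZ i) (vertZ i')) =
          WithLp.ofLp (vmap (vertZ i) - vmap (vertZ i')) ⬝ᵥ WithLp.ofLp (vmap (vertZ i) - vmap (vertZ i')) := by
        rw [vmap_sub, vmap_dot]; rfl
      have e2 : toR (dd vz1 vz2) = WithLp.ofLp (vmap vz1 - vmap vz2) ⬝ᵥ WithLp.ofLp (vmap vz1 - vmap vz2) := by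
        rw [vmap_sub, vmap_dot]; rfl
      rw [e1, hi, hi']
      show WithLp.ofLp (act A (vmap vz1) - act A (vmap vz2)) ⬝ᵥ WithLp.ofLp (act A (vmap vz1) - act A (vmap vz2)) = _
      rw [show WithLp.ofLp (act A (vmap vz1) - act A (vmap vz2)) = A.mulVec (WithLp.ofLp (vmap vz1 - vmap vz2)) from
        by simp [act, Matrix.mulVec_sub]]
      rw [dot_rot hrot.1, ← e2, Ddist]
    obtain ⟨j, hj1, hj2⟩ := D6 i i' hdist
    refine ⟨j, ?_⟩
    have hM1 : (mmap (Ms j)).mulVec (vmap vz1) = A.mulVec (vmap vz1) := by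
      have := act_mmap_vmap (D3 j).1
      rw [hj1] at this
      rw [show (mmap (Ms j)).mulVec (vmap vz1) = act (mmap (Ms j)) (vmap vz1) from rfl, this, hi]
      rfl
    have hM2 : (mmap (Ms j)).mulVec (vmap vz2) = A.mulVec (vmap vz2) := by
      have := act_mmap_vmap (D3 j).2
      rw [hj2] at this
      rw [show (mmap (Ms j)).mulVec (vmap vz2) = act (mmap (Ms j)) (vmap vz2) from rfl, this, hi']
      rfl
    exact unique_rot (isRot j) hrot hM1 hM2
  · rintro A ⟨j, rfl⟩
    exact memG j


theorem Gicos_one : (1 : Matrix (Fin 3) (Fin 3) ℝ) ∈ Gicos := by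
  refine ⟨⟨by simp, by simp⟩, ?_⟩
  have : act (1 : Matrix (Fin 3) (Fin 3) ℝ) = id := funext fun v => by simp [act]
  rw [this, Set.image_id]

theorem Gicos_mul {A B : Matrix (Fin 3) (Fin 3) ℝ} (hA : A ∈ Gicos) (hB : B ∈ Gicos) :
    A * B ∈ Gicos := by
  obtain ⟨⟨hA1, hA2⟩, hA3⟩ := hA
  obtain ⟨⟨hB1, hB2⟩, hB3⟩ := hB
  refine ⟨⟨?_, ?_⟩, ?_⟩
  · rw [Matrix.transpose_mul]
    calc Bᵀ * Aᵀ * (A * B) = Bᵀ * (Aᵀ * A) * B := by noncomm_ring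
      _ = 1 := by rw [hA1, mul_one, hB1]
  · rw [Matrix.det_mul, hA2, hB2, mul_one]
  · have hcomp : act (A * B) = act A ∘ act B := by
      funext v
      show WithLp.toLp 2 ((A * B).mulVec v) = WithLp.toLp 2 (A.mulVec (B.mulVec v))
      rw [Matrix.mulVec_mulVec]
    rw [hcomp, Set.image_comp, hB3, hA3]

theorem Gicos_inv {A : Matrix (Fin 3) (Fin 3) ℝ} (hA : A ∈ Gicos) : Aᵀ ∈ Gicos := by
  obtain ⟨⟨hA1, hA2⟩, hA3⟩ := hA
  have hAAt : A * Aᵀ = 1 := mul_eq_one_comm.mp hA1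
  refine ⟨⟨?_, ?_⟩, ?_⟩
  · rw [Matrix.transpose_transpose]; exact hAAt
  · rw [Matrix.det_transpose]; exact hA2
  · conv_lhs => rw [← hA3]
    rw [← Set.image_comp]
    have : act Aᵀ ∘ act A = id := by
      funext v
      show WithLp.toLp 2 (Aᵀ.mulVec (A.mulVec v)) = v
      rw [Matrix.mulVec_mulVec, hA1, Matrix.one_mulVec]
    rw [this, Set.image_id]

def Gg : Type := {A : Matrix (Fin 3) (Fin 3) ℝ // A ∈ Gicos}

noncomputable instance : Group Gg where
  mul A B := ⟨A.1 * B.1, Gicos_mul A.2 B.2⟩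
  one := ⟨1, Gicos_one⟩
  inv A := ⟨A.1ᵀ, Gicos_inv A.2⟩
  mul_assoc a b c := Subtype.ext (mul_assoc a.1 b.1 c.1)
  one_mul a := Subtype.ext (one_mul a.1)
  mul_one a := Subtype.ext (mul_one a.1)
  inv_mul_cancel a := Subtype.ext a.2.1.1

theorem Gg_mul_val (a b : Gg) : (a * b).1 = a.1 * b.1 := rfl

noncomputable instance : SMul Gg (EuclideanSpace ℝ (Fin 3)) := ⟨fun g x => act g.1 x⟩

theorem Gg_smul_def (g : Gg) (x : EuclideanSpace ℝ (Fin 3)) : g • x = act g.1 x := rfl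

noncomputable instance : MulAction Gg (EuclideanSpace ℝ (Fin 3)) where
  one_smul x := by
    show WithLp.toLp 2 ((1 : Matrix (Fin 3) (Fin 3) ℝ).mulVec x) = x
    rw [Matrix.one_mulVec]
  mul_smul g h x := by
    show WithLp.toLp 2 ((g.1 * h.1).mulVec x) = WithLp.toLp 2 (g.1.mulVec (h.1.mulVec x))
    rw [Matrix.mulVec_mulVec]

noncomputable def emb (j : Fin 60) : Gg := ⟨mmap (Ms j), by rw [Gicos_eq]; exact ⟨j, rfl⟩⟩

theorem mmap_act_v1 (j : Fin 60) : act (mmap (Ms j)) (vmap vz1) = vmap (vertZ (fl1 j)) :=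
  act_mmap_vmap (D3 j).1

theorem mmap_act_v2 (j : Fin 60) : act (mmap (Ms j)) (vmap vz2) = vmap (vertZ (fl2 j)) :=
  act_mmap_vmap (D3 j).2

theorem mmap_Ms_inj {j j' : Fin 60} (h : mmap (Ms j) = mmap (Ms j')) : j = j' := by
  apply D4 j j'
  · apply D5
    apply vmap_inj
    rw [← mmap_act_v1 j, ← mmap_act_v1 j', h]
  · apply D5
    apply vmap_inj
    rw [← mmap_act_v2 j, ← mmap_act_v2 j', h]

theorem emb_bij : Function.Bijective emb := by
  constructor
  · intro j j' h
    exact mmap_Ms_inj (congrArg Subtype.val h)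
  · intro g
    obtain ⟨j, hj⟩ : ∃ j, mmap (Ms j) = g.1 := Gicos_eq.subset g.2
    exact ⟨j, Subtype.ext hj⟩

theorem cardGg : Nat.card Gg = 60 := by
  rw [← Nat.card_eq_of_bijective emb emb_bij, Nat.card_eq_fintype_card, Fintype.card_fin]

theorem orb_eq (v : EuclideanSpace ℝ (Fin 3)) : orb Gicos v = MulAction.orbit Gg v := by
  ext q
  constructor
  · rintro ⟨A, hA, rfl⟩
    exact ⟨⟨A, hA⟩, rfl⟩
  · rintro ⟨g, rfl⟩
    exact ⟨g.1, g.2, rfl⟩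

def Sv (v : EuclideanSpace ℝ (Fin 3)) : Set (Fin 60) := {j | act (mmap (Ms j)) v = v}

noncomputable def stabEquiv (v : EuclideanSpace ℝ (Fin 3)) :
    Sv v ≃ MulAction.stabilizer Gg v := by
  apply Equiv.ofBijective (fun j => ⟨emb j.1, j.2⟩)
  constructor
  · intro a b h
    have : emb a.1 = emb b.1 := congrArg Subtype.val h
    exact Subtype.ext (emb_bij.1 this)
  · rintro ⟨g, hg⟩
    obtain ⟨j, hj⟩ := emb_bij.2 g
    refine ⟨⟨j, ?_⟩, ?_⟩
    · show act (mmap (Ms j)) v = v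
      have : g • v = v := hg
      rw [← hj] at this
      exact this
    · exact Subtype.ext hj

theorem map_twoI : twoI.map toR = (2:ℝ) • (1 : Matrix (Fin 3) (Fin 3) ℝ) := by
  refine Matrix.ext fun i j => ?_
  rw [Matrix.map_apply, Matrix.smul_apply, Matrix.one_apply]
  by_cases h : i = j
  · subst h
    rw [if_pos rfl, show twoI i i = ⟨2,0⟩ from by fin_cases i <;> rfl, toR_mk]
    norm_num
  · rw [if_neg h, show twoI i j = ⟨0,0⟩ from by
      fin_cases i <;> fin_cases j <;> first | rfl | (exact absurd rfl h), toR_mk]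
    norm_num

theorem mmap_Ms_zero : mmap (Ms 0) = 1 := by
  rw [DM0, mmap, map_twoI, smul_smul]
  norm_num

theorem ker_lemma (D : MatZ) (aa : VecZ) (i1 i2 : Fin 3) (l : Zphi)
    (hc : cz (fun t => D i1 t) (fun t => D i2 t) = fun t => l * aa t)
    (h0 : (fun t => l * aa t) ≠ zv)
    {x : EuclideanSpace ℝ (Fin 3)} (hx : (D.map toR).mulVec x = 0) :
    ∃ c : ℝ, x = c • vmap aa := by
  have hrow : ∀ i : Fin 3, (fun t => toR (D i t)) ⬝ᵥ x = 0 := fun i => congrFun hx i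
  have hperp := perp_perp _ _ x (hrow i1) (hrow i2)
  have hcr : crR (fun t => toR (D i1 t)) (fun t => toR (D i2 t)) = vmap (fun t => l * aa t) := by
    rw [show (fun t => toR (D i1 t)) = vmap (fun t => D i1 t) from rfl,
      show (fun t => toR (D i2 t)) = vmap (fun t => D i2 t) from rfl, vmap_cz, hc]
  rw [hcr] at hperp
  have hne : WithLp.ofLp (vmap (fun t => l * aa t)) ≠ 0 := by
    intro hz
    apply h0
    funext t
    apply toR_injective
    rw [show toR (zv t) = (0:ℝ) from by rw [show zv t = (0:Zphi) from rfl, _root_.map_zero]]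
    exact congrFun hz t
  obtain ⟨c, hc2⟩ := cross_zero_para hperp hne
  refine ⟨c * toR l, ?_⟩
  apply WithLp.ofLp_injective 2
  rw [hc2]
  funext t
  show c * vmap (fun t => l * aa t) t = (c * toR l) * vmap aa t
  rw [show vmap (fun t => l * aa t) t = toR (l * aa t) from rfl, _root_.map_mul,
    show vmap aa t = toR (aa t) from rfl]
  ring

theorem dmat_map (j : Fin 60) : (dmat j).map toR = (Ms j).map toR - twoI.map toR := by
  refine Matrix.ext fun i t => ?_
  rw [show (dmat j).map toR i t = toR (Ms j i t - twoI i t) from rfl, _root_.map_sub]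
  rfl

theorem stab_ker {j : Fin 60} {v : EuclideanSpace ℝ (Fin 3)} (h : act (mmap (Ms j)) v = v) :
    ((dmat j).map toR).mulVec v = 0 := by
  have h2 : ((Ms j).map toR).mulVec v = (2:ℝ) • v := by
    have h1 : (2:ℝ)⁻¹ • ((Ms j).map toR).mulVec v = v := by
      rw [← Matrix.smul_mulVec]
      exact congrArg WithLp.ofLp h
    calc ((Ms j).map toR).mulVec v = (2:ℝ) • ((2:ℝ)⁻¹ • ((Ms j).map toR).mulVec v) := by
          rw [smul_smul]; norm_num
      _ = (2:ℝ) • v := by rw [h1]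
  rw [dmat_map, Matrix.sub_mulVec, h2, map_twoI, Matrix.smul_mulVec, Matrix.one_mulVec,
    sub_self]


theorem crR_smul_left (d : ℝ) (a b : Fin 3 → ℝ) : crR (d • a) b = d • crR a b := by
  funext i
  fin_cases i
  · show d * a 1 * b 2 - d * a 2 * b 1 = d * (a 1 * b 2 - a 2 * b 1)
    ring
  · show d * a 2 * b 0 - d * a 0 * b 2 = d * (a 2 * b 0 - a 0 * b 2)
    ring
  · show d * a 0 * b 1 - d * a 1 * b 0 = d * (a 0 * b 1 - a 1 * b 0)
    ring

theorem crR_self (a : Fin 3 → ℝ) : crR a a = 0 := by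
  funext i
  fin_cases i
  · show a 1 * a 2 - a 2 * a 1 = (0:ℝ)
    ring
  · show a 2 * a 0 - a 0 * a 2 = (0:ℝ)
    ring
  · show a 0 * a 1 - a 1 * a 0 = (0:ℝ)
    ring

theorem vmap_zv : vmap zv = 0 := by
  ext t
  show toR (zv t) = (0:ℝ)
  rw [show zv t = (0:Zphi) from rfl, _root_.map_zero]

theorem act_smul (A : Matrix (Fin 3) (Fin 3) ℝ) (c : ℝ) (x : EuclideanSpace ℝ (Fin 3)) :
    act A (c • x) = c • act A x :=
  congrArg (WithLp.toLp 2) (Matrix.mulVec_smul A c x)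

theorem Sv_card {v : EuclideanSpace ℝ (Fin 3)} (hv : v ≠ 0) :
    Nat.card (Sv v) = 1 ∨ Nat.card (Sv v) = 2 ∨ Nat.card (Sv v) = 3 ∨ Nat.card (Sv v) = 5 := by
  have h0 : (0 : Fin 60) ∈ Sv v := by
    show act (mmap (Ms 0)) v = v
    rw [mmap_Ms_zero]
    simp [act]
  have hax : ∀ j : Fin 60, j ≠ 0 → j ∈ Sv v → ∃ c : ℝ, c ≠ 0 ∧ v = c • vmap (axZ (axOf j)) := by
    intro j hj hjS
    obtain ⟨hcz, h0'⟩ := D7 j hj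
    obtain ⟨c, hcv⟩ := ker_lemma (dmat j) (axZ (axOf j)) (rw1 j) (rw2 j) (lam j) hcz h0'
      (stab_ker hjS)
    refine ⟨c, ?_, hcv⟩
    intro hc0
    apply hv
    rw [hcv, hc0, zero_smul]
  by_cases hex : ∃ j : Fin 60, j ≠ 0 ∧ j ∈ Sv v
  · obtain ⟨j0, hj0, hj0S⟩ := hex
    obtain ⟨c, hcne, hc⟩ := hax j0 hj0 hj0S
    have hSv : Sv v = ↑(Finset.filter (fun j => j = 0 ∨ axOf j = axOf j0) Finset.univ) := by
      ext j
      simp only [Finset.coe_filter, Finset.mem_univ, true_and, Set.mem_setOf_eq]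
      constructor
      · intro hjS
        by_cases hj : j = 0
        · exact Or.inl hj
        · right
          obtain ⟨c', hc'ne, hc'⟩ := hax j hj hjS
          have heq : vmap (axZ (axOf j)) = (c / c') • vmap (axZ (axOf j0)) := by
            have hcc : c' • vmap (axZ (axOf j)) = c • vmap (axZ (axOf j0)) := by
              rw [← hc', ← hc]
            calc vmap (axZ (axOf j)) = (c'⁻¹ * c') • vmap (axZ (axOf j)) := by
                  rw [inv_mul_cancel₀ hc'ne, one_smul]
              _ = c'⁻¹ • (c' • vmap (axZ (axOf j))) := by rw [← smul_smul]
              _ = c'⁻¹ • (c • vmap (axZ (axOf j0))) := by rw [hcc]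
              _ = (c / c') • vmap (axZ (axOf j0)) := by rw [smul_smul]; ring_nf
          apply D9
          apply vmap_inj
          apply WithLp.ofLp_injective 2
          rw [← vmap_cz, heq, WithLp.ofLp_smul, crR_smul_left, crR_self, smul_zero, vmap_zv, WithLp.ofLp_zero]
      · intro hj
        rcases hj with rfl | hj
        · exact h0
        · show act (mmap (Ms j)) v = v
          have hfix : act (mmap (Ms j)) (vmap (axZ (axOf j))) = vmap (axZ (axOf j)) :=
            act_mmap_vmap (D8 j)
          rw [hc, ← hj, act_smul, hfix]
    rw [hSv, Nat.card_coe_set_eq, Set.ncard_coe_finset]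
    rcases D10 (axOf j0) with h | h | h
    · right; left; exact h
    · right; right; left; exact h
    · right; right; right; exact h
  · push_neg at hex
    have hSv : Sv v = {0} := by
      apply Set.eq_singleton_iff_unique_mem.mpr
      refine ⟨h0, fun j hj => ?_⟩
      by_contra hne
      exact hex j hne hj
    rw [hSv]
    left
    rw [Nat.card_coe_set_eq, Set.ncard_singleton]



/-- Every orbit of a nonzero vector under the icosahedral rotation group has
cardinality 12, 20, 30, or 60. -/
theorem icosahedral_orbit_card (v : EuclideanSpace ℝ (Fin 3)) (hv : v ≠ 0) :
    (orb Gicos v).ncard = 12 ∨ (orb Gicos v).ncard = 20 ∨ (orb Gicos v).ncard = 30 ∨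
      (orb Gicos v).ncard = 60 := by
  have e := MulAction.orbitProdStabilizerEquivGroup Gg v
  have hprod : Nat.card (MulAction.orbit Gg v) * Nat.card (MulAction.stabilizer Gg v) = 60 := by
    rw [← Nat.card_prod, Nat.card_congr e, cardGg]
  have hstab : Nat.card (MulAction.stabilizer Gg v) = Nat.card (Sv v) :=
    (Nat.card_congr (stabEquiv v)).symm
  have horb : (orb Gicos v).ncard = Nat.card (MulAction.orbit Gg v) := by
    rw [orb_eq]
    exact (Nat.card_coe_set_eq _).symm
  rw [hstab] at hprod
  rcases Sv_card hv with h | h | h | h <;> rw [h] at hprod <;> rw [horb]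
  · right; right; right; omega
  · right; right; left; omega
  · right; left; omega
  · left; omega
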